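/- Let q be a power of an odd prime. Then any two elements of order 2 in PSL(2,F_q) are conjugate; that is, the involutions of PSL(2,F_q) form a single conjugacy class. -/

import Mathlib

open Matrix

set_option linter.unusedSectionVars false
set_option maxHeartbeats 1000000

namespace PSLInvolutions

variable {F : Type*} [Field F] [Fintype F]

local notation "SL2" => Matrix.SpecialLinearGroup (Fin 2) F

instance : Fact (Even (Fintype.card (Fin 2))) := ⟨by simp⟩

private def Mmat (e : F) : Matrix (Fin 2) (Fin 2) F := !![0, e; -e⁻¹, 0]

private lemma det_Mmat {e : F} (he : e ≠ 0) : (Mmat e).det = 1 := by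
  simp [Mmat, Matrix.det_fin_two_of]
  field_simp

private def MSL (e : F) (he : e ≠ 0) : SL2 := ⟨Mmat e, det_Mmat he⟩

private lemma MSL_neg {e : F} (he : e ≠ 0) (he' : -e ≠ 0) :
    MSL (-e) he' = - MSL e he := by
  apply Subtype.ext
  show Mmat (-e) = -(Mmat e)
  ext i j
  fin_cases i <;> fin_cases j <;> simp [Mmat, inv_neg]

/-- Core: any trace-zero element of SL2 is SL2-semiconjugate to some `MSL e`. -/
private lemma exists_conj_MSL (h2 : (2:F) ≠ 0) (S : SL2)
    (htr : S.1 1 1 = - S.1 0 0) :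
    ∃ (e : F) (he : e ≠ 0) (C : SL2), C * S = MSL e he * C := by
  obtain ⟨a, b, c, hd, hS⟩ : ∃ a b c : F, a^2 + b*c = -1 ∧ S.1 = !![a, b; c, -a] := by
    refine ⟨S.1 0 0, S.1 0 1, S.1 1 0, ?_, ?_⟩
    · have h := S.2
      rw [Matrix.det_fin_two, htr] at h
      linear_combination -h
    · conv_lhs => rw [Matrix.eta_fin_two S.1]
      rw [htr]
  obtain ⟨x, y, hdd⟩ : ∃ x y : F, c*x^2 - 2*a*x*y - b*y^2 ≠ 0 := by
    by_cases hb : b = 0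
    · by_cases hc : c = 0
      · have ha : a ≠ 0 := by
          intro h0
          rw [h0, hb, hc] at hd
          norm_num at hd
        refine ⟨1, 1, ?_⟩
        rw [hb, hc]
        ring_nf
        simpa using mul_ne_zero ha h2
      · exact ⟨1, 0, by simpa using hc⟩
    · refine ⟨0, 1, ?_⟩
      simpa using hb
  have hMm : Mmat (-(c*x^2 - 2*a*x*y - b*y^2)⁻¹ : F)
      = !![0, -(c*x^2 - 2*a*x*y - b*y^2)⁻¹; c*x^2 - 2*a*x*y - b*y^2, 0] := by
    rw [Mmat, inv_neg, neg_neg, inv_inv]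
  refine ⟨-(c*x^2 - 2*a*x*y - b*y^2)⁻¹, by simpa using inv_ne_zero hdd,
    ⟨!![(c*x-a*y)/(c*x^2 - 2*a*x*y - b*y^2), -(a*x+b*y)/(c*x^2 - 2*a*x*y - b*y^2); -y, x], ?_⟩, ?_⟩
  · rw [Matrix.det_fin_two_of]
    rw [div_mul_eq_mul_div, div_mul_eq_mul_div, ← sub_div, div_eq_one_iff_eq hdd]
    ring
  · apply Subtype.ext
    show _ * S.1 = Mmat _ * _
    rw [hS, hMm]
    ext i j
    fin_cases i <;> fin_cases j <;>
      simp [Matrix.mul_apply, Fin.sum_univ_two]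
    · rw [div_mul_eq_mul_div, div_mul_eq_mul_div, ← add_div, inv_mul_eq_div, div_left_inj' hdd]
      linear_combination (-y) * hd
    · rw [div_mul_eq_mul_div, div_mul_eq_mul_div, ← neg_div, ← add_div, inv_mul_eq_div, ← neg_div,
        div_left_inj' hdd]
      linear_combination x * hd
    · rw [mul_div_cancel₀ _ hdd]
      ring
    · rw [mul_div_cancel₀ _ hdd]
      ring

/-- diagonal conjugation : diag(u, u⁻¹) ⬝ M_e = M_{u²e} ⬝ diag(u,u⁻¹) -/
private def DSL (u : F) (hu : u ≠ 0) : SL2 :=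
  ⟨!![u, 0; 0, u⁻¹], by rw [Matrix.det_fin_two_of]; field_simp; norm_num⟩

private lemma DSL_conj {u e : F} (hu : u ≠ 0) (he : e ≠ 0) (he' : u^2*e ≠ 0) :
    DSL u hu * MSL e he = MSL (u^2*e) he' * DSL u hu := by
  apply Subtype.ext
  show _ * Mmat e = Mmat _ * _
  rw [Mmat, Mmat, DSL]
  ext i j
  fin_cases i <;> fin_cases j <;>
    simp [Matrix.mul_apply, Fin.sum_univ_two] <;> field_simp <;> ring

/-- when -1 = i², conjugate M_e to diag(i, -i) -/
private lemma conj_to_K (h2 : (2:F) ≠ 0) {i e : F} (hi : i * i = -1) (he : e ≠ 0) :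
    ∃ C : SL2, (C : Matrix (Fin 2) (Fin 2) F) * Mmat e = !![i, 0; 0, -i] * C := by
  have hine : i ≠ 0 := by
    intro h; rw [h] at hi; norm_num at hi
  refine ⟨⟨!![-(2*i*e)⁻¹, 2⁻¹; -1, -(i*e)], ?_⟩, ?_⟩
  · rw [Matrix.det_fin_two_of]
    field_simp
    ring
  · rw [Mmat]
    ext r s
    fin_cases r <;> fin_cases s <;>
      simp [Matrix.mul_apply, Fin.sum_univ_two]
    · field_simp
    · field_simp
      linear_combination (-1) * hi
    · field_simp
    · linear_combination (-e) * hi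

/-- two nonsquares: -1 is a square -/
private lemma isSquare_neg_one_aux {u : F} (hu : u ≠ 0)
    (h1 : ¬ IsSquare u) (h2 : ¬ IsSquare (-u)) : IsSquare (-1 : F) := by
  classical
  have c1 : quadraticChar F u = -1 := quadraticChar_neg_one_iff_not_isSquare.mpr h1
  have c2 : quadraticChar F (-u) = -1 := quadraticChar_neg_one_iff_not_isSquare.mpr h2
  have key : quadraticChar F (-1 : F) = 1 := by
    have hm := map_mul (quadraticChar F) (-1) u
    rw [neg_one_mul, c1, c2] at hm
    linarith
  exact (quadraticChar_one_iff_isSquare (by norm_num : (-1:F) ≠ 0)).mp key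

/-- M_e and M_f are conjugate up to sign in SL2 -/
private lemma conj_MSL_MSL (h2 : (2:F) ≠ 0) {e f : F} (he : e ≠ 0) (hf : f ≠ 0) :
    ∃ C : SL2, C * MSL e he = MSL f hf * C ∨ C * MSL e he = (-(MSL f hf)) * C := by
  by_cases hsq : IsSquare (e / f)
  · obtain ⟨t, ht⟩ := hsq
    have htne : t ≠ 0 := by
      intro h0; rw [h0, mul_zero] at ht
      exact (div_ne_zero he hf) ht
    have hef : f = (t⁻¹)^2 * e := by
      field_simp
      field_simp at ht
      linear_combination -ht
    refine ⟨DSL t⁻¹ (inv_ne_zero htne), Or.inl ?_⟩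
    have h' : (t⁻¹)^2 * e ≠ 0 := by rw [← hef]; exact hf
    have hthis := DSL_conj (e := e) (inv_ne_zero htne) he h'
    have hMeq : MSL f hf = MSL ((t⁻¹)^2 * e) h' := Subtype.ext (congrArg Mmat hef)
    rw [hMeq]
    exact hthis
  · by_cases hsq2 : IsSquare (-(e / f))
    · obtain ⟨t, ht⟩ := hsq2
      have htne : t ≠ 0 := by
        intro h0; rw [h0, mul_zero] at ht
        exact (neg_ne_zero.mpr (div_ne_zero he hf)) ht
      have hef : -f = (t⁻¹)^2 * e := by
        field_simp
        field_simp at ht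
        linear_combination ht
      refine ⟨DSL t⁻¹ (inv_ne_zero htne), Or.inr ?_⟩
      have hnf : -f ≠ 0 := neg_ne_zero.mpr hf
      have h' : (t⁻¹)^2 * e ≠ 0 := by rw [← hef]; exact hnf
      have hthis := DSL_conj (e := e) (inv_ne_zero htne) he h'
      have hMeq : MSL ((t⁻¹)^2 * e) h' = -(MSL f hf) := by
        rw [← MSL_neg hf hnf]
        exact (Subtype.ext (congrArg Mmat hef)).symm
      rw [hMeq] at hthis
      exact hthis
    · obtain ⟨i, hi⟩ : IsSquare (-1 : F) :=
        isSquare_neg_one_aux (div_ne_zero he hf) hsq hsq2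
      have hi' : i * i = -1 := hi.symm
      obtain ⟨Ce, hCe⟩ := conj_to_K h2 hi' he
      obtain ⟨Cf, hCf⟩ := conj_to_K h2 hi' hf
      have hK : det (!![i, 0; 0, -i] : Matrix (Fin 2) (Fin 2) F) = 1 := by
        rw [Matrix.det_fin_two_of]
        linear_combination -hi'
      set K : SL2 := ⟨!![i, 0; 0, -i], hK⟩ with hKdef
      have hCe' : Ce * MSL e he = K * Ce := Subtype.ext hCe
      have hCf' : Cf * MSL f hf = K * Cf := Subtype.ext hCf
      refine ⟨Cf⁻¹ * Ce, Or.inl ?_⟩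
      calc Cf⁻¹ * Ce * MSL e he = Cf⁻¹ * (K * Ce) := by rw [mul_assoc, hCe']
        _ = Cf⁻¹ * (K * Cf) * (Cf⁻¹ * Ce) := by group
        _ = Cf⁻¹ * (Cf * MSL f hf) * (Cf⁻¹ * Ce) := by rw [hCf']
        _ = MSL f hf * (Cf⁻¹ * Ce) := by group

/-- lifting an involution of the quotient to a trace-zero element -/
private lemma exists_lift (h2 : (2:F) ≠ 0)
    (g : SL2 ⧸ Subgroup.center (Matrix.SpecialLinearGroup (Fin 2) F))
    (hg : orderOf g = 2) :
    ∃ S : SL2, (QuotientGroup.mk S = g) ∧ S.1 1 1 = - S.1 0 0 := by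
  obtain ⟨S, rfl⟩ := QuotientGroup.mk_surjective g
  refine ⟨S, rfl, ?_⟩
  have hnc : S ∉ Subgroup.center (Matrix.SpecialLinearGroup (Fin 2) F) := by
    intro hmem
    have : (QuotientGroup.mk S : SL2 ⧸ Subgroup.center (Matrix.SpecialLinearGroup (Fin 2) F)) = 1 :=
      (QuotientGroup.eq_one_iff S).mpr hmem
    rw [this, orderOf_one] at hg
    norm_num at hg
  have hpow : (QuotientGroup.mk S : SL2 ⧸ Subgroup.center (Matrix.SpecialLinearGroup (Fin 2) F)) ^ 2 = 1 :=
    orderOf_dvd_iff_pow_eq_one.mp (dvd_of_eq hg)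
  have hsq : (QuotientGroup.mk (S * S) : SL2 ⧸ Subgroup.center (Matrix.SpecialLinearGroup (Fin 2) F)) = 1 := by
    rw [QuotientGroup.mk_mul, ← sq]
    exact hpow
  rw [QuotientGroup.eq_one_iff] at hsq
  obtain ⟨r, hr2, hrS⟩ := Matrix.SpecialLinearGroup.mem_center_iff.mp hsq
  simp only [Fintype.card_fin] at hr2
  have hr1 : r = 1 ∨ r = -1 := by
    have : (r - 1) * (r + 1) = 0 := by linear_combination hr2
    rcases mul_eq_zero.mp this with h | h
    · left; linear_combination h
    · right; linear_combination h
  -- entrywise data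
  have h00 : S.1 0 0 * S.1 0 0 + S.1 0 1 * S.1 1 0 = r := by
    have := congrFun (congrFun hrS 0) 0
    simpa [Matrix.SpecialLinearGroup.coe_mul, Matrix.mul_apply, Fin.sum_univ_two,
      Matrix.scalar_apply] using this.symm
  have h11 : S.1 1 0 * S.1 0 1 + S.1 1 1 * S.1 1 1 = r := by
    have := congrFun (congrFun hrS 1) 1
    simpa [Matrix.SpecialLinearGroup.coe_mul, Matrix.mul_apply, Fin.sum_univ_two,
      Matrix.scalar_apply] using this.symm
  have h01 : S.1 0 0 * S.1 0 1 + S.1 0 1 * S.1 1 1 = 0 := by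
    have := congrFun (congrFun hrS 0) 1
    simpa [Matrix.SpecialLinearGroup.coe_mul, Matrix.mul_apply, Fin.sum_univ_two,
      Matrix.scalar_apply] using this.symm
  have h10 : S.1 1 0 * S.1 0 0 + S.1 1 1 * S.1 1 0 = 0 := by
    have := congrFun (congrFun hrS 1) 0
    simpa [Matrix.SpecialLinearGroup.coe_mul, Matrix.mul_apply, Fin.sum_univ_two,
      Matrix.scalar_apply] using this.symm
  have hdet : S.1 0 0 * S.1 1 1 - S.1 0 1 * S.1 1 0 = 1 := by
    have := S.2
    rwa [Matrix.det_fin_two] at this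
  rcases hr1 with hr | hr
  · -- r = 1 : S is central, contradiction
    exfalso
    subst hr
    by_cases htr : S.1 0 0 + S.1 1 1 = 0
    · -- trace zero and S² = 1 : 2 = 0
      apply h2
      have h4 : (2:F) * 2 = 0 := by
        linear_combination (-1:F) * h00 - h11 - 2*hdet + (S.1 0 0 + S.1 1 1) * htr
      exact mul_self_eq_zero.mp h4
    · -- off-diagonal zero, S scalar
      have hb : S.1 0 1 = 0 := by
        have := h01
        rcases mul_eq_zero.mp (show S.1 0 1 * (S.1 0 0 + S.1 1 1) = 0 by linear_combination h01) with h | h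
        · exact h
        · exact absurd h htr
      have hc : S.1 1 0 = 0 := by
        rcases mul_eq_zero.mp (show S.1 1 0 * (S.1 0 0 + S.1 1 1) = 0 by linear_combination h10) with h | h
        · exact h
        · exact absurd h htr
      have had : S.1 1 1 = S.1 0 0 := by
        -- a² = 1, ad = 1 → d = a
        have ha2 : S.1 0 0 * S.1 0 0 = 1 := by linear_combination h00 - (S.1 1 0) * hb
        have had : S.1 0 0 * S.1 1 1 = 1 := by linear_combination hdet + (S.1 1 0) * hb
        have hx : S.1 0 0 * S.1 0 0 * S.1 1 1 = S.1 0 0 * (S.1 0 0 * S.1 1 1) := by ring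
        rw [ha2, had, one_mul, mul_one] at hx
        exact hx
      apply hnc
      apply Matrix.SpecialLinearGroup.mem_center_iff.mpr
      refine ⟨S.1 0 0, ?_, ?_⟩
      · simp only [Fintype.card_fin]
        linear_combination h00 - (S.1 1 0) * hb
      · ext i j
        fin_cases i <;> fin_cases j <;>
          simp [Matrix.scalar_apply, hb, hc, had]
  · subst hr
    have key : (S.1 0 0 + S.1 1 1)^2 = 0 := by
      linear_combination h00 + h11 + 2 * hdet
    have h0 := pow_eq_zero_iff (n := 2) (by norm_num) |>.mp key
    linear_combination h0

end PSLInvolutions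

/-- In PSL(2, F_q) with q a power of an odd prime, any two elements of order 2
are conjugate. -/
theorem isConj_of_orderOf_eq_two_PSL {F : Type*} [Field F] [Fintype F]
    (hq : Odd (Fintype.card F))
    (g h : Matrix.SpecialLinearGroup (Fin 2) F ⧸
      Subgroup.center (Matrix.SpecialLinearGroup (Fin 2) F))
    (hg : orderOf g = 2) (hh : orderOf h = 2) : IsConj g h := by
  classical
  have hchar : ringChar F ≠ 2 := by
    intro hchar
    have := FiniteField.even_card_of_char_two hchar
    rw [Nat.odd_iff] at hq
    omega
  have h2 : (2 : F) ≠ 0 := by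
    intro h0
    apply hchar
    have hdvd : ringChar F ∣ 2 := by
      have := (CharP.cast_eq_zero_iff F (ringChar F) 2).mp (by exact_mod_cast h0)
      exact this
    rcases (Nat.dvd_prime Nat.prime_two).mp hdvd with h | h
    · exact absurd h CharP.ringChar_ne_one
    · exact h
  obtain ⟨S, hSg, hStr⟩ := PSLInvolutions.exists_lift h2 g hg
  obtain ⟨T, hTh, hTtr⟩ := PSLInvolutions.exists_lift h2 h hh
  obtain ⟨e, he, C1, hC1⟩ := PSLInvolutions.exists_conj_MSL h2 S hStr
  obtain ⟨f, hf, C2, hC2⟩ := PSLInvolutions.exists_conj_MSL h2 T hTtr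
  obtain ⟨C3, hC3⟩ := PSLInvolutions.conj_MSL_MSL h2 he hf
  -- combine: D * S = (±1) • (C2⁻¹ stuff)
  have hneg1 : ((-1 : Matrix.SpecialLinearGroup (Fin 2) F) ∈
      Subgroup.center (Matrix.SpecialLinearGroup (Fin 2) F)) := by
    apply Subgroup.mem_center_iff.mpr
    intro gg
    simp [mul_neg, neg_mul]
  rw [isConj_iff]
  have key : ∃ D : Matrix.SpecialLinearGroup (Fin 2) F,
      D * S = T * D ∨ D * S = (-T) * D := by
    rcases hC3 with hC3 | hC3
    · refine ⟨C2⁻¹ * C3 * C1, Or.inl ?_⟩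
      calc C2⁻¹ * C3 * C1 * S = C2⁻¹ * C3 * (PSLInvolutions.MSL e he) * C1 := by
            rw [mul_assoc, hC1, ← mul_assoc]
        _ = C2⁻¹ * (PSLInvolutions.MSL f hf) * C3 * C1 := by
            rw [mul_assoc C2⁻¹, hC3, ← mul_assoc]
        _ = C2⁻¹ * (C2 * T * C2⁻¹) * C3 * C1 := by
            rw [show PSLInvolutions.MSL f hf = C2 * T * C2⁻¹ by rw [hC2]; group]
        _ = T * (C2⁻¹ * C3 * C1) := by group
    · refine ⟨C2⁻¹ * C3 * C1, Or.inr ?_⟩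
      calc C2⁻¹ * C3 * C1 * S = C2⁻¹ * C3 * (PSLInvolutions.MSL e he) * C1 := by
            rw [mul_assoc, hC1, ← mul_assoc]
        _ = C2⁻¹ * (-(PSLInvolutions.MSL f hf)) * C3 * C1 := by
            rw [mul_assoc C2⁻¹, hC3, ← mul_assoc]
        _ = C2⁻¹ * (-(C2 * T * C2⁻¹)) * C3 * C1 := by
            rw [show PSLInvolutions.MSL f hf = C2 * T * C2⁻¹ by rw [hC2]; group]
        _ = (-T) * (C2⁻¹ * C3 * C1) := by
            simp only [mul_neg, neg_mul]
            congr 1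
            group
  obtain ⟨D, hD⟩ := key
  refine ⟨QuotientGroup.mk D, ?_⟩
  rw [← hSg, ← hTh]
  rcases hD with hD | hD
  · rw [← QuotientGroup.mk_inv, ← QuotientGroup.mk_mul, ← QuotientGroup.mk_mul]
    rw [show D * S * D⁻¹ = T by rw [hD, mul_inv_cancel_right]]
  · rw [← QuotientGroup.mk_inv, ← QuotientGroup.mk_mul, ← QuotientGroup.mk_mul]
    rw [show D * S * D⁻¹ = (-1) * T by rw [hD, mul_inv_cancel_right, neg_one_mul]]
    rw [QuotientGroup.mk_mul, (QuotientGroup.eq_one_iff _).mpr hneg1, one_mul]
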